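/- Fix n > 0 and let g(x) = (x+1)·log(x+1) − x·log x. Then lim_{b→∞} (b·g(n/b)) / (n·log b) = 1. In particular, the Holevo capacity C_J(b, 1, n, 0) = b·g(n/b) of a noiseless link grows without bound as the baud-rate b → ∞ (asymptotically like n·log b), whereas the Shannon capacity b·log(1 + n/b) converges to the finite limit n. -/

import Mathlib

/-- g(x) = (x+1)·log(x+1) − x·log x (with the Mathlib convention log 0 = 0,
so g(0) = 0), the Holevo capacity per pulse. -/
noncomputable def g (x : ℝ) : ℝ := (x + 1) * Real.log (x + 1) - x * Real.log x

/-- d(τ, n, ν) = √(((1+τ)n + ν + 1)² − 4τn(n+1)). -/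
noncomputable def dFun (τ n ν : ℝ) : ℝ :=
  Real.sqrt (((1 + τ) * n + ν + 1) ^ 2 - 4 * τ * n * (n + 1))

/-- d_x(τ, n, ν) = (d(τ, n, ν) − 1 + (−1)^x((τ−1)n + ν))/2 for x ∈ {0,1}. -/
noncomputable def dx (x : ℕ) (τ n ν : ℝ) : ℝ :=
  (dFun τ n ν - 1 + (-1 : ℝ) ^ x * ((τ - 1) * n + ν)) / 2

/-- Shannon capacity C_S(b, τ, n, ν) = b·log(1 + τn/(b + ν)). -/
noncomputable def C_S (b τ n ν : ℝ) : ℝ := b * Real.log (1 + τ * n / (b + ν))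

/-- Holevo (joint-detection) capacity C_J(b, τ, n, ν) = b·(g((n+ν)/b) − g(ν/b)). -/
noncomputable def C_J (b τ n ν : ℝ) : ℝ := b * (g ((n + ν) / b) - g (ν / b))

/-- Entanglement-assisted capacity
C_E(b, τ, n, ν) = b·∑_{x=0,1} (g((τn + x·ν)/b) − g(d_x(τ, n/b, ν/b))). -/
noncomputable def C_E (b τ n ν : ℝ) : ℝ :=
  b * ((g ((τ * n + 0 * ν) / b) - g (dx 0 τ (n / b) (ν / b))) +
       (g ((τ * n + 1 * ν) / b) - g (dx 1 τ (n / b) (ν / b))))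

open Filter Real

lemma corr_tendsto (n : ℝ) :
    Tendsto (fun b : ℝ => b * Real.log (1 + n / b) + n * Real.log (1 + n / b)
      - n * Real.log n) atTop (nhds (n + n * 0 - n * Real.log n)) := by
  have h1 := Real.tendsto_mul_log_one_add_div_atTop n
  have h2 : Tendsto (fun b : ℝ => Real.log (1 + n / b)) atTop (nhds 0) := by
    have : Tendsto (fun b : ℝ => 1 + n / b) atTop (nhds 1) := by
      simpa using (tendsto_const_nhds : Tendsto (fun _ : ℝ => (1:ℝ)) atTop (nhds 1)).add (tendsto_const_nhds.div_atTop tendsto_id)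
    simpa [Function.comp_def] using (Real.continuousAt_log (by norm_num)).tendsto.comp this
  exact (h1.add (h2.const_mul n)).sub tendsto_const_nhds

lemma key_eq (n : ℝ) (hn : 0 < n) : ∀ᶠ b : ℝ in atTop,
    b * g (n / b) = (b * Real.log (1 + n / b) + n * Real.log (1 + n / b)
      - n * Real.log n) + n * Real.log b := by
  filter_upwards [eventually_gt_atTop 0] with b hb
  have hb' : b ≠ 0 := ne_of_gt hb
  rw [g, Real.log_div (ne_of_gt hn) hb']
  have : n / b + 1 = 1 + n / b := by ring
  rw [this]
  field_simp
  ring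

/-- STATEMENT 11: for fixed n > 0, lim_{b→∞} (b·g(n/b))/(n·log b) = 1; in
particular the Holevo capacity b·g(n/b) of a noiseless link grows without
bound as b → ∞, whereas the Shannon capacity b·log(1 + n/b) converges to n. -/
theorem holevo_large_baudrate_asymptotics (n : ℝ) (hn : 0 < n) :
    Filter.Tendsto (fun b : ℝ => (b * g (n / b)) / (n * Real.log b))
      Filter.atTop (nhds 1) ∧
    Filter.Tendsto (fun b : ℝ => b * g (n / b)) Filter.atTop Filter.atTop ∧
    Filter.Tendsto (fun b : ℝ => b * Real.log (1 + n / b)) Filter.atTop (nhds n) := by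
  have hlog : Tendsto (fun b : ℝ => n * Real.log b) atTop atTop :=
    (Real.tendsto_log_atTop).const_mul_atTop hn
  have hc := corr_tendsto n
  refine ⟨?_, ?_, Real.tendsto_mul_log_one_add_div_atTop n⟩
  · have h0 : Tendsto (fun b : ℝ => (b * Real.log (1 + n / b) + n * Real.log (1 + n / b)
        - n * Real.log n) / (n * Real.log b) + 1) atTop (nhds (0 + 1)) :=
      (hc.div_atTop hlog).add tendsto_const_nhds
    rw [show (1 : ℝ) = 0 + 1 by norm_num]
    refine Tendsto.congr' ?_ h0
    filter_upwards [key_eq n hn, hlog.eventually (eventually_gt_atTop 0)] with b hb hpos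
    rw [hb, add_div, div_self (ne_of_gt hpos)]
  · have heq : (fun b : ℝ => (b * Real.log (1 + n / b) + n * Real.log (1 + n / b)
        - n * Real.log n) + n * Real.log b) =ᶠ[atTop] fun b => b * g (n / b) :=
      (key_eq n hn).mono fun b hb => hb.symm
    exact Tendsto.congr' heq (hc.add_atTop hlog)
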